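/- Let d ≥ 1 and let k ≥ 1, k' ≥ 1 be integers with k + k' ≤ d. Let x ∈ ℝ^d and let T ⊆ {1,…,d} with |T| = k be such that |x_i| ≥ |x_j| for every i ∈ T and every j ∉ T (a top-k index set of x). Let R be a uniformly random subset of {1,…,d} ∖ T of size k', and define the random vector C(x) ∈ ℝ^d by C(x)_i = x_i if i ∈ T ∪ R and C(x)_i = 0 otherwise (the mix-(k,k') compressor). Then ‖E[C(x)] − x‖ ≤ η‖x‖ with η = (d − k − k')/√((d − k)d), and E[‖C(x) − E[C(x)]‖²] ≤ ω‖x‖² with ω = k'(d − k − k')/((d − k)d). -/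

import Mathlib

lemma count_mem_powersetCard {α : Type*} [DecidableEq α] (S : Finset α) (n : ℕ) (i : α)
    (hi : i ∈ S) :
    ((S.powersetCard (n+1)).filter (fun R => i ∈ R)).card = (S.card - 1).choose n := by
  rw [← Finset.card_erase_of_mem hi, ← Finset.card_powersetCard n (S.erase i)]
  refine Finset.card_bij' (fun R _ => R.erase i) (fun R _ => insert i R) ?_ ?_ ?_ ?_
  · intro R hR
    simp only [Finset.mem_filter, Finset.mem_powersetCard] at hR ⊢
    refine ⟨Finset.erase_subset_erase i hR.1.1, ?_⟩
    rw [Finset.card_erase_of_mem hR.2, hR.1.2]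
    omega
  · intro R hR
    simp only [Finset.mem_filter, Finset.mem_powersetCard] at hR ⊢
    have hiR : i ∉ R := fun h => (Finset.mem_erase.1 (hR.1 h)).1 rfl
    refine ⟨⟨?_, ?_⟩, Finset.mem_insert_self _ _⟩
    · exact Finset.insert_subset hi (hR.1.trans (Finset.erase_subset _ _))
    · rw [Finset.card_insert_of_notMem hiR, hR.2]
  · intro R hR
    simp only [Finset.mem_filter] at hR
    exact Finset.insert_erase hR.2
  · intro R hR
    simp only [Finset.mem_powersetCard] at hR
    have hiR : i ∉ R := fun h => (Finset.mem_erase.1 (hR.1 h)).1 rfl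
    exact Finset.erase_insert hiR

set_option maxHeartbeats 1000000 in
theorem mix_compressor_bias_variance
    (d k k' : ℕ) (hk : 1 ≤ k) (hk' : 1 ≤ k') (hkd : k + k' ≤ d)
    (x : EuclideanSpace ℝ (Fin d)) (T : Finset (Fin d)) (hT : T.card = k)
    (htop : ∀ i ∈ T, ∀ j ∉ T, |x j| ≤ |x i|)
    (C : Finset (Fin d) → EuclideanSpace ℝ (Fin d))
    (hC : ∀ (R : Finset (Fin d)) (i : Fin d), C R i = if i ∈ T ∪ R then x i else 0) :
    let Ps : Finset (Finset (Fin d)) := Finset.powersetCard k' (Finset.univ \ T)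
    let EC : EuclideanSpace ℝ (Fin d) := (Ps.card : ℝ)⁻¹ • ∑ R ∈ Ps, C R
    ‖EC - x‖ ≤ (((d : ℝ) - k - k') / Real.sqrt (((d : ℝ) - k) * d)) * ‖x‖ ∧
      (Ps.card : ℝ)⁻¹ * ∑ R ∈ Ps, ‖C R - EC‖ ^ 2 ≤
        ((k' : ℝ) * ((d : ℝ) - k - k') / (((d : ℝ) - k) * d)) * ‖x‖ ^ 2 := by
  intro Ps EC
  classical
  have hPs : Ps = Finset.powersetCard k' (Finset.univ \ T) := rfl
  have hEC : EC = (Ps.card : ℝ)⁻¹ • ∑ R ∈ Ps, C R := rfl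
  set S : Finset (Fin d) := Finset.univ \ T with hSdef
  have hkd' : k ≤ d := le_trans (Nat.le_add_right _ _) hkd
  have hScard : S.card = d - k := by
    rw [hSdef, Finset.card_sdiff_of_subset (Finset.subset_univ T), Finset.card_univ, Fintype.card_fin, hT]
  have hk'dk : k' ≤ d - k := by omega
  have hdk1 : 1 ≤ d - k := le_trans hk' hk'dk
  have hNval : Ps.card = (d - k).choose k' := by
    rw [hPs, Finset.card_powersetCard, hScard]
  have hNpos : 0 < Ps.card := hNval ▸ Nat.choose_pos hk'dk
  set N : ℝ := (Ps.card : ℝ) with hNdef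
  have hNR : (0:ℝ) < N := by rw [hNdef]; exact_mod_cast hNpos
  set A : ℕ := (d - k - 1).choose (k' - 1) with hAdef
  have hidnat : (d - k) * A = k' * Ps.card := by
    have h := Nat.add_one_mul_choose_eq (d - k - 1) (k' - 1)
    have h1 : d - k - 1 + 1 = d - k := by omega
    have h2 : k' - 1 + 1 = k' := by omega
    rw [h1, h2] at h
    rw [hNval, hAdef, h, Nat.mul_comm]
  -- per-coordinate counting
  have hAcount : ∀ i ∈ S, (Ps.filter (fun R => i ∈ R)).card = A := by
    intro i hiS
    have hkk : k' - 1 + 1 = k' := by omega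
    have h := count_mem_powersetCard S (k' - 1) i hiS
    rw [hkk, hScard] at h
    rw [hPs]
    exact h
  have hm : ((d - k : ℕ) : ℝ) = (d:ℝ) - k := by
    push_cast [Nat.cast_sub hkd']; ring
  set m : ℝ := (d:ℝ) - k with hmdef
  have hmpos : (0:ℝ) < m := by
    rw [← hm]; exact_mod_cast hdk1
  have hk'm : (k':ℝ) ≤ m := by
    rw [← hm]; exact_mod_cast hk'dk
  have hdpos : (0:ℝ) < d := by
    have : 1 ≤ d := le_trans hk hkd'
    exact_mod_cast this
  set p : ℝ := (A:ℝ) / N with hpdef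
  have hidR : m * A = (k':ℝ) * N := by
    rw [← hm, hNdef]; exact_mod_cast hidnat
  have hpval : p = (k':ℝ) / m := by
    rw [hpdef]
    field_simp
    linarith [hidR]
  have hp1 : 1 - p = (m - k') / m := by
    rw [hpval]; field_simp
  have hApN : (A:ℝ) = p * N := by
    rw [hpdef]; field_simp
  -- coordinate values
  have hsum : ∀ i : Fin d, (∑ R ∈ Ps, C R) i = (if i ∈ T then N else (A:ℝ)) * x i := by
    intro i
    rw [WithLp.ofLp_sum, Finset.sum_apply]
    by_cases hiT : i ∈ T
    · have : ∀ R ∈ Ps, C R i = x i := by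
        intro R hR; rw [hC]; simp [hiT]
      rw [Finset.sum_congr rfl this, Finset.sum_const, nsmul_eq_mul, if_pos hiT]
    · have hiS : i ∈ S := by simp [hSdef, hiT]
      have : ∀ R ∈ Ps, C R i = if i ∈ R then x i else 0 := by
        intro R hR; rw [hC]; simp [hiT]
      rw [Finset.sum_congr rfl this, ← Finset.sum_filter, Finset.sum_const, nsmul_eq_mul,
        hAcount i hiS, if_neg hiT]
  have hECi : ∀ i : Fin d, EC i = (if i ∈ T then 1 else p) * x i := by
    intro i
    rw [hEC, PiLp.smul_apply, hsum i, smul_eq_mul]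
    by_cases hiT : i ∈ T
    · rw [if_pos hiT, if_pos hiT, ← mul_assoc, inv_mul_cancel₀ (ne_of_gt hNR)]
    · rw [if_neg hiT, if_neg hiT, ← mul_assoc, hpdef, div_eq_inv_mul]
  -- norm squared as a sum
  have hns : ∀ y : EuclideanSpace ℝ (Fin d), ‖y‖^2 = ∑ i, (y i)^2 := by
    intro y
    rw [EuclideanSpace.norm_eq, Real.sq_sqrt (by positivity)]
    simp [Real.norm_eq_abs, sq_abs]
  -- splitting sums
  have hsplit : ∀ f : Fin d → ℝ, ∑ i, f i = ∑ i ∈ T, f i + ∑ i ∈ S, f i := by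
    intro f
    rw [hSdef, add_comm, Finset.sum_sdiff (Finset.subset_univ T)]
  -- key inequality
  have hSnn : (0:ℝ) ≤ ∑ i ∈ S, (x i)^2 := Finset.sum_nonneg fun i _ => sq_nonneg _
  have hkey : (d:ℝ) * ∑ i ∈ S, (x i)^2 ≤ m * ∑ i, (x i)^2 := by
    have h1 : (k:ℝ) * ∑ j ∈ S, (x j)^2 ≤ m * ∑ i ∈ T, (x i)^2 := by
      have hLHS : (k:ℝ) * ∑ j ∈ S, (x j)^2 = ∑ j ∈ S, ∑ i ∈ T, (x j)^2 := by
        simp [Finset.sum_const, hT, mul_comm, Finset.mul_sum]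
      have hRHS : m * ∑ i ∈ T, (x i)^2 = ∑ j ∈ S, ∑ i ∈ T, (x i)^2 := by
        rw [Finset.sum_const, hScard, nsmul_eq_mul, hm]
      rw [hLHS, hRHS]
      refine Finset.sum_le_sum fun j hj => Finset.sum_le_sum fun i hi => ?_
      have hjT : j ∉ T := (Finset.mem_sdiff.1 hj).2
      have := htop i hi j hjT
      calc (x j)^2 = |x j|^2 := (sq_abs _).symm
        _ ≤ |x i|^2 := pow_le_pow_left₀ (abs_nonneg _) this 2
        _ = (x i)^2 := sq_abs _
    rw [hsplit fun i => (x i)^2]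
    have : (d:ℝ) = k + m := by rw [hmdef]; ring
    nlinarith [h1, hSnn]
  have hkey2 : ∑ i ∈ S, (x i)^2 ≤ (m / d) * ∑ i, (x i)^2 := by
    rw [div_mul_eq_mul_div, le_div_iff₀ hdpos]
    linarith [hkey]
  -- bias
  have hb1 : ‖EC - x‖^2 = (1-p)^2 * ∑ i ∈ S, (x i)^2 := by
    rw [hns]
    have hco : ∀ i : Fin d, ((EC - x) i)^2 = if i ∈ T then 0 else (1-p)^2 * (x i)^2 := by
      intro i
      rw [PiLp.sub_apply, hECi]
      by_cases hiT : i ∈ T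
      · rw [if_pos hiT, if_pos hiT]; ring
      · rw [if_neg hiT, if_neg hiT]; ring
    rw [Finset.sum_congr rfl fun i _ => hco i, hsplit]
    rw [Finset.sum_eq_zero fun i hi => if_pos hi, zero_add, Finset.mul_sum]
    exact Finset.sum_congr rfl fun i hi => if_neg (Finset.mem_sdiff.1 hi).2
  constructor
  · -- bias bound
    have hxnn : (0:ℝ) ≤ ‖x‖ := norm_nonneg x
    have hηnn : (0:ℝ) ≤ ((m - k') / Real.sqrt (m * d)) * ‖x‖ :=
      mul_nonneg (div_nonneg (by linarith) (Real.sqrt_nonneg _)) hxnn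
    have hsq : ‖EC - x‖^2 ≤ (((m - k') / Real.sqrt (m * d)) * ‖x‖)^2 := by
      have hrw : (((m - k') / Real.sqrt (m * d)) * ‖x‖)^2
          = (m - k')^2 / (m * d) * ‖x‖^2 := by
        rw [mul_pow, div_pow, Real.sq_sqrt (by positivity)]
      rw [hrw, hb1, hp1, hns x]
      have h3 : ((m - k') / m)^2 * ∑ i ∈ S, (x i)^2
          ≤ ((m - k') / m)^2 * ((m / d) * ∑ i, (x i)^2) :=
        mul_le_mul_of_nonneg_left hkey2 (sq_nonneg _)
      have h4 : ((m - k') / m)^2 * ((m / d) * ∑ i, (x i)^2)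
          = (m - k')^2 / (m * d) * ∑ i, (x i)^2 := by
        field_simp
      linarith [h3, h4 ▸ h3]
    have := (abs_le_of_sq_le_sq' hsq hηnn).2
    exact this
  · -- variance bound
    have hv1 : ∀ R ∈ Ps, ‖C R - EC‖^2
        = ∑ i ∈ S, (if i ∈ R then (1-p)^2 else p^2) * (x i)^2 := by
      intro R hR
      rw [hns, hsplit]
      have eT : ∑ i ∈ T, ((C R - EC) i)^2 = 0 := by
        refine Finset.sum_eq_zero fun i hi => ?_
        rw [PiLp.sub_apply, hC, hECi, if_pos (Finset.mem_union_left _ hi), if_pos hi]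
        ring
      have eS : ∀ i ∈ S, ((C R - EC) i)^2 = (if i ∈ R then (1-p)^2 else p^2) * (x i)^2 := by
        intro i hi
        have hiT : i ∉ T := (Finset.mem_sdiff.1 hi).2
        rw [PiLp.sub_apply, hC, hECi, if_neg hiT]
        by_cases hiR : i ∈ R
        · rw [if_pos (Finset.mem_union_right _ hiR), if_pos hiR]; ring
        · rw [if_neg (by simp [hiT, hiR]), if_neg hiR]; ring
      rw [eT, zero_add]
      exact Finset.sum_congr rfl eS
    have hAle : A ≤ Ps.card := by
      have h1 : (d - k) * A ≤ (d - k) * Ps.card := by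
        rw [hidnat]; exact Nat.mul_le_mul_right _ hk'dk
      exact Nat.le_of_mul_le_mul_left h1 (by omega)
    have hv2 : ∑ R ∈ Ps, ‖C R - EC‖^2
        = ∑ i ∈ S, ((A:ℝ)*(1-p)^2 + (N - A)*p^2) * (x i)^2 := by
      rw [Finset.sum_congr rfl hv1, Finset.sum_comm]
      refine Finset.sum_congr rfl fun i hi => ?_
      rw [← Finset.sum_mul]
      congr 1
      rw [Finset.sum_ite, Finset.sum_const, Finset.sum_const, hAcount i hi]
      have hcards : (Ps.filter (fun R => i ∉ R)).card = Ps.card - A := by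
        have := Finset.card_filter_add_card_filter_not (s := Ps)
          (p := fun R => i ∈ R)
        rw [hAcount i hi] at this
        omega
      rw [hcards, nsmul_eq_mul, nsmul_eq_mul]
      push_cast [Nat.cast_sub hAle]
      ring
    have hfactor : N⁻¹ * ((A:ℝ)*(1-p)^2 + (N - A)*p^2) = p * (1-p) := by
      rw [hApN]
      field_simp
      ring
    have hLHSeq : N⁻¹ * ∑ R ∈ Ps, ‖C R - EC‖^2 = p * (1-p) * ∑ i ∈ S, (x i)^2 := by
      rw [hv2, Finset.mul_sum, Finset.mul_sum]
      refine Finset.sum_congr rfl fun i hi => ?_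
      rw [← mul_assoc, hfactor]
    rw [hNdef] at hLHSeq ⊢
    rw [hLHSeq]
    have hpp : p * (1-p) = (k':ℝ) * (m - k') / m^2 := by
      have h1p : (1 - (k':ℝ)/m) = (m - k')/m := by field_simp
      rw [hpval, h1p, div_mul_div_comm, pow_two]
    have h5 : p * (1-p) * ∑ i ∈ S, (x i)^2
        ≤ ((k':ℝ) * (m - k') / m^2) * ((m / d) * ∑ i, (x i)^2) := by
      rw [hpp]
      refine mul_le_mul_of_nonneg_left hkey2 ?_
      have : (0:ℝ) ≤ m - k' := by linarith
      positivity
    have h6 : ((k':ℝ) * (m - k') / m^2) * ((m / d) * ∑ i, (x i)^2)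
        = (k':ℝ) * (m - k') / (m * d) * ∑ i, (x i)^2 := by
      field_simp
    rw [hns x]
    calc p * (1-p) * ∑ i ∈ S, (x i)^2
        ≤ ((k':ℝ) * (m - k') / m^2) * ((m / d) * ∑ i, (x i)^2) := h5
      _ = (k':ℝ) * (m - k') / (m * d) * ∑ i, (x i)^2 := h6
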